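/- The statistical strength with correlated inputs equals the relative entropy of nonlocality: for every no-signaling behavior P in the (r,s) Bell scenario, the supremum over probability distributions D on Fin s × Fin s of the infimum over local behaviors Q of ∑_{x,y} D(x,y)·S(P(·,·|x,y)‖Q(·,·|x,y)) equals the infimum over local behaviors Q of the maximum over (x,y) of S(P(·,·|x,y)‖Q(·,·|x,y)); i.e. S_c(P) = S_nl(P). -/

import Mathlib

open scoped ENNReal
open Finset

/-- A probability distribution on a finite type. -/
def IsDist {Z : Type*} [Fintype Z] (p : Z → ℝ) : Prop :=
  (∀ z, 0 ≤ p z) ∧ ∑ z, p z = 1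

/-- Relative entropy (Kullback-Leibler divergence) of finitely supported
distributions, valued in `[0,∞]`, with the conventions `0·log(0/t) = 0` and
`S(p‖q) = ∞` whenever `q` vanishes at a point where `p` does not. -/
noncomputable def relEnt {Z : Type*} [Fintype Z] (p q : Z → ℝ) : ℝ≥0∞ :=
  if ∃ z, p z ≠ 0 ∧ q z = 0 then ⊤
  else ENNReal.ofReal (∑ z, p z * Real.log (p z / q z))

/-- A behavior in the (r,s) Bell scenario: `P a b x y = P(a,b|x,y)`. -/
def IsBehavior {r s : ℕ} (P : Fin r → Fin r → Fin s → Fin s → ℝ) : Prop :=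
  (∀ a b x y, 0 ≤ P a b x y) ∧ ∀ x y, ∑ a, ∑ b, P a b x y = 1

/-- The no-signaling conditions. -/
def NoSignaling {r s : ℕ} (P : Fin r → Fin r → Fin s → Fin s → ℝ) : Prop :=
  (∀ b x x' y, ∑ a, P a b x y = ∑ a, P a b x' y) ∧
  (∀ a x y y', ∑ b, P a b x y = ∑ b, P a b x y')

/-- Local (local-hidden-variable) behavior. -/
def IsLocal {r s : ℕ} (P : Fin r → Fin r → Fin s → Fin s → ℝ) : Prop :=
  ∃ (n : ℕ) (q : Fin n → ℝ) (PA : Fin r → Fin s → Fin n → ℝ)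
    (PB : Fin r → Fin s → Fin n → ℝ),
    IsDist q ∧
    (∀ x l, (∀ a, 0 ≤ PA a x l) ∧ ∑ a, PA a x l = 1) ∧
    (∀ y l, (∀ b, 0 ≤ PB b y l) ∧ ∑ b, PB b y l = 1) ∧
    (∀ a b x y, P a b x y = ∑ l, q l * PA a x l * PB b y l)

/-- Output distribution `P(·,·|x,y)` of a behavior for fixed inputs. -/
def outDist {r s : ℕ} (P : Fin r → Fin r → Fin s → Fin s → ℝ) (x y : Fin s) :
    Fin r × Fin r → ℝ := fun ab => P ab.1 ab.2 x y

/-- The behavior relative entropy `S_b(P‖P')`: the maximum over input pairs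
`(x,y)` of the relative entropy of the output distributions. -/
noncomputable def Sb {r s : ℕ} (P P' : Fin r → Fin r → Fin s → Fin s → ℝ) : ℝ≥0∞ :=
  Finset.univ.sup fun xy : Fin s × Fin s =>
    relEnt (outDist P xy.1 xy.2) (outDist P' xy.1 xy.2)

/-- A global wiring from the (r,s) scenario to the (rf,sf) scenario. -/
structure GlobalWiring (r s rf sf : ℕ) where
  I : Fin s → Fin s → Fin sf → Fin sf → ℝ          -- I x y χ ψ  =  I(x,y|χ,ψ)
  O : Fin rf → Fin rf → Fin r → Fin r → Fin s → Fin s → Fin sf → Fin sf → ℝ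
    -- O α β a b x y χ ψ  =  O(α,β|a,b,x,y,χ,ψ)
  I_nonneg : ∀ x y χ ψ, 0 ≤ I x y χ ψ
  I_sum : ∀ χ ψ, ∑ x, ∑ y, I x y χ ψ = 1
  O_nonneg : ∀ α β a b x y χ ψ, 0 ≤ O α β a b x y χ ψ
  O_sum : ∀ a b x y χ ψ, ∑ α, ∑ β, O α β a b x y χ ψ = 1

/-- Action of a global wiring on a behavior. -/
noncomputable def GlobalWiring.apply {r s rf sf : ℕ} (W : GlobalWiring r s rf sf)
    (P : Fin r → Fin r → Fin s → Fin s → ℝ) :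
    Fin rf → Fin rf → Fin sf → Fin sf → ℝ :=
  fun α β χ ψ => ∑ a, ∑ b, ∑ x, ∑ y,
    W.O α β a b x y χ ψ * P a b x y * W.I x y χ ψ

/-- LOSR wiring: a global wiring whose input and output boxes are local. -/
def GlobalWiring.IsLOSR {r s rf sf : ℕ} (W : GlobalWiring r s rf sf) : Prop :=
  ∃ (n m : ℕ) (q : Fin n → ℝ) (q' : Fin m → ℝ)
    (IA : Fin s → Fin sf → Fin n → ℝ) (IB : Fin s → Fin sf → Fin n → ℝ)
    (OA : Fin rf → Fin r → Fin s → Fin sf → Fin m → ℝ)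
    (OB : Fin rf → Fin r → Fin s → Fin sf → Fin m → ℝ),
    IsDist q ∧ IsDist q' ∧
    (∀ χ l, (∀ x, 0 ≤ IA x χ l) ∧ ∑ x, IA x χ l = 1) ∧
    (∀ ψ l, (∀ y, 0 ≤ IB y ψ l) ∧ ∑ y, IB y ψ l = 1) ∧
    (∀ a x χ u, (∀ α, 0 ≤ OA α a x χ u) ∧ ∑ α, OA α a x χ u = 1) ∧
    (∀ b y ψ u, (∀ β, 0 ≤ OB β b y ψ u) ∧ ∑ β, OB β b y ψ u = 1) ∧
    (∀ x y χ ψ, W.I x y χ ψ = ∑ l, q l * IA x χ l * IB y ψ l) ∧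
    (∀ α β a b x y χ ψ,
      W.O α β a b x y χ ψ = ∑ u, q' u * OA α a x χ u * OB β b y ψ u)

/-- UCLOSR wiring: a global wiring whose input and output boxes are products. -/
def GlobalWiring.IsUCLOSR {r s rf sf : ℕ} (W : GlobalWiring r s rf sf) : Prop :=
  ∃ (IA : Fin s → Fin sf → ℝ) (IB : Fin s → Fin sf → ℝ)
    (OA : Fin rf → Fin r → Fin s → Fin sf → ℝ)
    (OB : Fin rf → Fin r → Fin s → Fin sf → ℝ),
    (∀ χ, (∀ x, 0 ≤ IA x χ) ∧ ∑ x, IA x χ = 1) ∧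
    (∀ ψ, (∀ y, 0 ≤ IB y ψ) ∧ ∑ y, IB y ψ = 1) ∧
    (∀ a x χ, (∀ α, 0 ≤ OA α a x χ) ∧ ∑ α, OA α a x χ = 1) ∧
    (∀ b y ψ, (∀ β, 0 ≤ OB β b y ψ) ∧ ∑ β, OB β b y ψ = 1) ∧
    (∀ x y χ ψ, W.I x y χ ψ = IA x χ * IB y ψ) ∧
    (∀ α β a b x y χ ψ, W.O α β a b x y χ ψ = OA α a x χ * OB β b y ψ)

/-- The relative entropy of nonlocality `S_nl`. -/
noncomputable def Snl {r s : ℕ} (P : Fin r → Fin r → Fin s → Fin s → ℝ) : ℝ≥0∞ :=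
  ⨅ (Q : Fin r → Fin r → Fin s → Fin s → ℝ) (_ : IsBehavior Q ∧ IsLocal Q), Sb P Q

/-- The uniform-input statistical strength `S_u`. -/
noncomputable def Su {r s : ℕ} (P : Fin r → Fin r → Fin s → Fin s → ℝ) : ℝ≥0∞ :=
  ⨅ (Q : Fin r → Fin r → Fin s → Fin s → ℝ) (_ : IsBehavior Q ∧ IsLocal Q),
    ((s : ℝ≥0∞) ^ 2)⁻¹ * ∑ x, ∑ y, relEnt (outDist P x y) (outDist Q x y)

/-- The uncorrelated-input statistical strength `S_uc`. -/
noncomputable def Suc {r s : ℕ} (P : Fin r → Fin r → Fin s → Fin s → ℝ) : ℝ≥0∞ :=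
  ⨆ (DA : Fin s → ℝ) (DB : Fin s → ℝ) (_ : IsDist DA ∧ IsDist DB),
    ⨅ (Q : Fin r → Fin r → Fin s → Fin s → ℝ) (_ : IsBehavior Q ∧ IsLocal Q),
      ∑ x, ∑ y, ENNReal.ofReal (DA x * DB y) *
        relEnt (outDist P x y) (outDist Q x y)

/-! ### Auxiliary material for the proof -/

/-- The real-valued relative entropy sum. -/
noncomputable def gRel {Z : Type*} [Fintype Z] (p q : Z → ℝ) : ℝ :=
  ∑ z, p z * Real.log (p z / q z)

lemma relEnt_eq_ofReal {Z : Type*} [Fintype Z] (p q : Z → ℝ)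
    (h : ∀ z, p z ≠ 0 → q z ≠ 0) : relEnt p q = ENNReal.ofReal (gRel p q) := by
  rw [relEnt, if_neg]
  · rfl
  · push_neg
    exact h

lemma ofReal_sum_le' {ι : Type*} (s : Finset ι) (f : ι → ℝ) :
    ENNReal.ofReal (∑ i ∈ s, f i) ≤ ∑ i ∈ s, ENNReal.ofReal (f i) := by
  classical
  induction s using Finset.induction with
  | empty => simp
  | @insert a s ha ih =>
      rw [Finset.sum_insert ha, Finset.sum_insert ha]
      exact ENNReal.ofReal_add_le.trans (by gcongr)

lemma sum_outDist {r s : ℕ} {P : Fin r → Fin r → Fin s → Fin s → ℝ}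
    (hP : IsBehavior P) (x y : Fin s) : ∑ z, outDist P x y z = 1 := by
  rw [Fintype.sum_prod_type]
  exact hP.2 x y

/-- The uniform behavior. -/
noncomputable def unifB (r s : ℕ) : Fin r → Fin r → Fin s → Fin s → ℝ :=
  fun _ _ _ _ => (r : ℝ)⁻¹ * (r : ℝ)⁻¹

lemma unifB_pos {r s : ℕ} (hr : 0 < r) (a b : Fin r) (x y : Fin s) :
    0 < unifB r s a b x y := by
  have hrp : (0:ℝ) < (r:ℝ) := by exact_mod_cast hr
  have h1 : (0:ℝ) < (r:ℝ)⁻¹ := inv_pos.2 hrp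
  exact mul_pos h1 h1

lemma sum_inv_r {r : ℕ} (hr : 0 < r) : ∑ _a : Fin r, (r : ℝ)⁻¹ = 1 := by
  rw [Finset.sum_const, Finset.card_univ, Fintype.card_fin, nsmul_eq_mul]
  field_simp

lemma isBehavior_unifB {r s : ℕ} (hr : 0 < r) : IsBehavior (unifB r s) := by
  constructor
  · intro a b x y; exact (unifB_pos hr a b x y).le
  · intro x y
    have hrp : (r:ℝ) ≠ 0 := by positivity
    simp only [unifB, Finset.sum_const, Finset.card_univ, Fintype.card_fin, nsmul_eq_mul]
    field_simp

lemma isLocal_unifB {r s : ℕ} (hr : 0 < r) : IsLocal (unifB r s) := by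
  have hrpos : (0:ℝ) < (r:ℝ) := by exact_mod_cast hr
  refine ⟨1, fun _ => 1, fun _ _ _ => (r:ℝ)⁻¹, fun _ _ _ => (r:ℝ)⁻¹, ?_, ?_, ?_, ?_⟩
  · exact ⟨fun _ => zero_le_one, by simp⟩
  · intro x l; exact ⟨fun _ => by positivity, sum_inv_r hr⟩
  · intro y l; exact ⟨fun _ => by positivity, sum_inv_r hr⟩
  · intro a b x y; simp [unifB]

lemma isBehavior_mix {r s : ℕ} {Q1 Q2 : Fin r → Fin r → Fin s → Fin s → ℝ}
    (a b : ℝ) (ha : 0 ≤ a) (hb : 0 ≤ b) (hab : a + b = 1)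
    (h1 : IsBehavior Q1) (h2 : IsBehavior Q2) :
    IsBehavior (fun α β x y => a * Q1 α β x y + b * Q2 α β x y) := by
  constructor
  · intro α β x y
    have := h1.1 α β x y; have := h2.1 α β x y
    positivity
  · intro x y
    simp only [Finset.sum_add_distrib, ← Finset.mul_sum]
    rw [h1.2 x y, h2.2 x y]
    linarith

lemma isLocal_mix {r s : ℕ} {Q1 Q2 : Fin r → Fin r → Fin s → Fin s → ℝ}
    (a b : ℝ) (ha : 0 ≤ a) (hb : 0 ≤ b) (hab : a + b = 1)
    (h1 : IsLocal Q1) (h2 : IsLocal Q2) :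
    IsLocal (fun α β x y => a * Q1 α β x y + b * Q2 α β x y) := by
  obtain ⟨n, q, PA, PB, hq, hPA, hPB, hQ⟩ := h1
  obtain ⟨m, q', PA', PB', hq', hPA', hPB', hQ'⟩ := h2
  refine ⟨n + m,
    Fin.addCases (fun i => a * q i) (fun j => b * q' j),
    fun c x => Fin.addCases (PA c x) (PA' c x),
    fun c y => Fin.addCases (PB c y) (PB' c y), ?_, ?_, ?_, ?_⟩
  · constructor
    · intro l
      refine Fin.addCases (fun i => ?_) (fun j => ?_) l
      · simp only [Fin.addCases_left]
        exact mul_nonneg ha (hq.1 i)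
      · simp only [Fin.addCases_right]
        exact mul_nonneg hb (hq'.1 j)
    · rw [Fin.sum_univ_add]
      simp only [Fin.addCases_left, Fin.addCases_right, ← Finset.mul_sum,
        hq.2, hq'.2, mul_one]
      exact hab
  · intro x l
    refine Fin.addCases (fun i => ?_) (fun j => ?_) l
    · simp only [Fin.addCases_left]; exact hPA x i
    · simp only [Fin.addCases_right]; exact hPA' x j
  · intro y l
    refine Fin.addCases (fun i => ?_) (fun j => ?_) l
    · simp only [Fin.addCases_left]; exact hPB y i
    · simp only [Fin.addCases_right]; exact hPB' y j
  · intro c d x y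
    rw [Fin.sum_univ_add]
    simp only [Fin.addCases_left, Fin.addCases_right]
    rw [hQ c d x y, hQ' c d x y, Finset.mul_sum, Finset.mul_sum]
    congr 1 <;> exact Finset.sum_congr rfl fun i _ => by ring

lemma gRel_convex {Z : Type*} [Fintype Z] (p q1 q2 : Z → ℝ)
    (hp : ∀ z, 0 ≤ p z) (h1 : ∀ z, 0 < q1 z) (h2 : ∀ z, 0 < q2 z)
    (a b : ℝ) (ha : 0 ≤ a) (hb : 0 ≤ b) (hab : a + b = 1) :
    gRel p (fun z => a * q1 z + b * q2 z) ≤ a * gRel p q1 + b * gRel p q2 := by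
  unfold gRel
  rw [Finset.mul_sum, Finset.mul_sum, ← Finset.sum_add_distrib]
  refine Finset.sum_le_sum fun z _ => ?_
  rcases eq_or_lt_of_le (hp z) with h | hpz
  · simp [← h]
  have hq1 := h1 z; have hq2 := h2 z
  have hmix : 0 < a * q1 z + b * q2 z := by
    rcases lt_or_ge 0 a with h' | h'
    · have : 0 < a * q1 z := mul_pos h' hq1
      nlinarith [mul_nonneg hb hq2.le]
    · have ha0 : a = 0 := le_antisymm h' ha
      have hb1 : b = 1 := by linarith
      simp [ha0, hb1, hq2]
  have hlog : a * Real.log (q1 z) + b * Real.log (q2 z) ≤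
      Real.log (a * q1 z + b * q2 z) := by
    have := strictConcaveOn_log_Ioi.concaveOn.2 (Set.mem_Ioi.2 hq1)
      (Set.mem_Ioi.2 hq2) ha hb hab
    simpa [smul_eq_mul] using this
  have e0 : Real.log (p z / (a * q1 z + b * q2 z)) =
      Real.log (p z) - Real.log (a * q1 z + b * q2 z) :=
    Real.log_div hpz.ne' hmix.ne'
  have e1 : Real.log (p z / q1 z) = Real.log (p z) - Real.log (q1 z) :=
    Real.log_div hpz.ne' hq1.ne'
  have e2 : Real.log (p z / q2 z) = Real.log (p z) - Real.log (q2 z) :=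
    Real.log_div hpz.ne' hq2.ne'
  have key : Real.log (p z / (a * q1 z + b * q2 z)) ≤
      a * Real.log (p z / q1 z) + b * Real.log (p z / q2 z) := by
    rw [e0, e1, e2]
    have hx : (a + b) * Real.log (p z) = Real.log (p z) := by rw [hab, one_mul]
    nlinarith [hlog, hx]
  calc p z * Real.log (p z / (a * q1 z + b * q2 z))
      ≤ p z * (a * Real.log (p z / q1 z) + b * Real.log (p z / q2 z)) :=
        mul_le_mul_of_nonneg_left key hpz.le
    _ = a * (p z * Real.log (p z / q1 z)) + b * (p z * Real.log (p z / q2 z)) := by ring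

lemma gRel_perturb {Z : Type*} [Fintype Z] (p q u : Z → ℝ)
    (hp : IsDist p) (hq : ∀ z, 0 ≤ q z) (hu : ∀ z, 0 ≤ u z)
    (hsupp : ∀ z, p z ≠ 0 → q z ≠ 0)
    (a b : ℝ) (ha : 0 < a) (hb : 0 ≤ b) :
    gRel p (fun z => a * q z + b * u z) ≤ gRel p q + Real.log a⁻¹ := by
  unfold gRel
  have hps : ∑ z, p z * Real.log a⁻¹ = Real.log a⁻¹ := by
    rw [← Finset.sum_mul, hp.2, one_mul]
  rw [← hps, ← Finset.sum_add_distrib]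
  refine Finset.sum_le_sum fun z _ => ?_
  rcases eq_or_lt_of_le (hp.1 z) with h | hpz
  · simp [← h]
  have hqz : 0 < q z := lt_of_le_of_ne (hq z) (Ne.symm (hsupp z hpz.ne'))
  have hmix : 0 < a * q z + b * u z := by nlinarith [mul_nonneg hb (hu z)]
  have hmono : Real.log (a * q z) ≤ Real.log (a * q z + b * u z) :=
    Real.log_le_log (by positivity) (by nlinarith [mul_nonneg hb (hu z)])
  have e0 : Real.log (p z / (a * q z + b * u z)) =
      Real.log (p z) - Real.log (a * q z + b * u z) :=
    Real.log_div hpz.ne' hmix.ne'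
  have e1 : Real.log (p z / q z) = Real.log (p z) - Real.log (q z) :=
    Real.log_div hpz.ne' hqz.ne'
  have e2 : Real.log (a * q z) = Real.log a + Real.log (q z) :=
    Real.log_mul ha.ne' hqz.ne'
  have e3 : Real.log a⁻¹ = -Real.log a := Real.log_inv a
  have key : Real.log (p z / (a * q z + b * u z)) ≤
      Real.log (p z / q z) + Real.log a⁻¹ := by
    rw [e0, e1, e3]
    nlinarith [hmono, e2]
  nlinarith [mul_le_mul_of_nonneg_left key hpz.le]

set_option maxHeartbeats 1000000 in
/-- Key separation lemma: a suitable input distribution exists. -/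
lemma exists_good_dist {r s : ℕ} (hr : 0 < r) (hs : 0 < s)
    (P : Fin r → Fin r → Fin s → Fin s → ℝ) (hP : IsBehavior P)
    (v : ℝ) (hv0 : 0 ≤ v)
    (hlt : ∀ Q, IsBehavior Q → IsLocal Q → ENNReal.ofReal v < Sb P Q) :
    ∃ D : Fin s × Fin s → ℝ, IsDist D ∧ ∀ Q, IsBehavior Q → IsLocal Q →
      ENNReal.ofReal v ≤ ∑ t : Fin s × Fin s, ENNReal.ofReal (D t) *
        relEnt (outDist P t.1 t.2) (outDist Q t.1 t.2) := by
  classical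
  -- the convex sets
  set A : Set ((Fin s × Fin s) → ℝ) :=
    {z | ∃ Q, IsBehavior Q ∧ IsLocal Q ∧ (∀ a b x y, 0 < Q a b x y) ∧
      ∀ t : Fin s × Fin s, gRel (outDist P t.1 t.2) (outDist Q t.1 t.2) ≤ z t} with hA
  set B : Set ((Fin s × Fin s) → ℝ) := {z | ∀ t, z t < v} with hB
  -- basic facts about full-support local behaviors
  have hgood : ∀ Q, IsBehavior Q → IsLocal Q → (∀ a b x y, 0 < Q a b x y) →
      ∃ t : Fin s × Fin s, v < gRel (outDist P t.1 t.2) (outDist Q t.1 t.2) := by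
    intro Q hQb hQl hQpos
    have h := hlt Q hQb hQl
    rw [Sb] at h
    obtain ⟨t, _, ht⟩ := Finset.lt_sup_iff.mp h
    refine ⟨t, ?_⟩
    rw [relEnt_eq_ofReal _ _ (fun z hz => (hQpos z.1 z.2 t.1 t.2).ne')] at ht
    exact (ENNReal.ofReal_lt_ofReal_iff_of_nonneg hv0).mp ht
  have hAB : Disjoint B A := by
    rw [Set.disjoint_left]
    rintro z hzB ⟨Q, hQb, hQl, hQpos, hz⟩
    obtain ⟨t, ht⟩ := hgood Q hQb hQl hQpos
    exact absurd (hzB t) (not_lt.2 (le_of_lt (lt_of_lt_of_le ht (hz t))))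
  have hBopen : IsOpen B := by
    have : B = Set.pi Set.univ (fun _ : Fin s × Fin s => Set.Iio v) := by
      ext z; simp [hB, Set.mem_pi]
    rw [this]
    exact isOpen_set_pi Set.finite_univ fun _ _ => isOpen_Iio
  have hBconv : Convex ℝ B := by
    intro z1 hz1 z2 hz2 a b ha hb hab
    intro t
    simp only [Pi.add_apply, Pi.smul_apply, smul_eq_mul]
    rcases eq_or_lt_of_le ha with h' | h'
    · simp only [← h', zero_mul, zero_add]
      have hb1 : b = 1 := by linarith
      simpa [hb1] using hz2 t
    · rcases eq_or_lt_of_le hb with h'' | h''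
      · simp only [← h'', zero_mul, add_zero]
        have ha1 : a = 1 := by linarith
        simpa [ha1] using hz1 t
      · have := hz1 t; have := hz2 t
        nlinarith
  have hAconv : Convex ℝ A := by
    rintro z1 ⟨Q1, hQ1b, hQ1l, hQ1pos, hz1⟩ z2 ⟨Q2, hQ2b, hQ2l, hQ2pos, hz2⟩ a b ha hb hab
    refine ⟨fun α β x y => a * Q1 α β x y + b * Q2 α β x y,
      isBehavior_mix a b ha hb hab hQ1b hQ2b,
      isLocal_mix a b ha hb hab hQ1l hQ2l, ?_, ?_⟩
    · intro α β x y
      show 0 < a * Q1 α β x y + b * Q2 α β x y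
      rcases lt_or_ge 0 a with h' | h'
      · have h1 := mul_pos h' (hQ1pos α β x y)
        have h2 := mul_nonneg hb (hQ2b.1 α β x y)
        linarith
      · have ha0 : a = 0 := le_antisymm h' ha
        have hb1 : b = 1 := by linarith
        rw [ha0, hb1]
        simpa using hQ2pos α β x y
    · intro t
      have hconv := gRel_convex (outDist P t.1 t.2) (outDist Q1 t.1 t.2)
        (outDist Q2 t.1 t.2) (fun z => hP.1 z.1 z.2 t.1 t.2)
        (fun z => hQ1pos z.1 z.2 t.1 t.2) (fun z => hQ2pos z.1 z.2 t.1 t.2)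
        a b ha hb hab
      have harr : outDist (fun α β x y => a * Q1 α β x y + b * Q2 α β x y) t.1 t.2
          = fun z => a * outDist Q1 t.1 t.2 z + b * outDist Q2 t.1 t.2 z := rfl
      rw [harr]
      refine hconv.trans ?_
      simp only [Pi.add_apply, Pi.smul_apply, smul_eq_mul]
      have := hz1 t; have := hz2 t
      nlinarith
  -- separation
  obtain ⟨f, u, hfB, hfA⟩ := geometric_hahn_banach_open hBconv hBopen hAconv hAB
  -- basis vectors
  set e : (Fin s × Fin s) → (Fin s × Fin s) → ℝ :=
    fun t => fun j => if t = j then (1:ℝ) else 0 with he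
  have hf_eq : ∀ z : (Fin s × Fin s) → ℝ, f z = ∑ t, z t * f (e t) := by
    intro z
    conv_lhs => rw [pi_eq_sum_univ z]
    rw [map_sum]
    exact Finset.sum_congr rfl fun t _ => by rw [map_smul, smul_eq_mul]
  -- the uniform behavior's gRel vector lies in A
  have hU : IsBehavior (unifB r s) := isBehavior_unifB hr
  have hUl : IsLocal (unifB r s) := isLocal_unifB hr
  have hUpos : ∀ a b x y, 0 < unifB r s a b x y := unifB_pos hr
  have hgUA : (fun t : Fin s × Fin s =>
      gRel (outDist P t.1 t.2) (outDist (unifB r s) t.1 t.2)) ∈ A :=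
    ⟨unifB r s, hU, hUl, hUpos, fun t => le_rfl⟩
  set c0 : ℝ := f (fun t : Fin s × Fin s =>
      gRel (outDist P t.1 t.2) (outDist (unifB r s) t.1 t.2)) with hc0
  have hc0u : u ≤ c0 := hfA _ hgUA
  -- D0 is nonneg
  have hD0nn : ∀ t, 0 ≤ f (e t) := by
    intro t
    by_contra hneg
    push_neg at hneg
    have hmem : ∀ M : ℝ, 0 ≤ M →
        ((fun t' : Fin s × Fin s =>
          gRel (outDist P t'.1 t'.2) (outDist (unifB r s) t'.1 t'.2)) + M • e t) ∈ A := by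
      intro M hM
      refine ⟨unifB r s, hU, hUl, hUpos, fun t' => ?_⟩
      have hnn : 0 ≤ M * e t t' := by
        rcases eq_or_ne t t' with h | h
        · rw [he]; simp only [if_pos h]; linarith
        · rw [he]; simp only [if_neg h]; simp
      simp only [Pi.add_apply, Pi.smul_apply, smul_eq_mul]
      linarith
    have hMle : ∀ M : ℝ, 0 ≤ M → u ≤ c0 + M * f (e t) := by
      intro M hM
      have h := hfA _ (hmem M hM)
      rwa [map_add, map_smul, smul_eq_mul, ← hc0] at h
    have hDne : f (e t) ≠ 0 := ne_of_lt hneg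
    set M : ℝ := (c0 - u + 1) / (-f (e t)) with hM
    have hMpos : 0 ≤ M := by
      apply div_nonneg _ (by linarith)
      linarith
    have h2 := hMle M hMpos
    have hcalc : M * f (e t) = -(c0 - u + 1) := by
      rw [hM, div_mul_eq_mul_div, div_neg, mul_div_assoc, div_self hDne, mul_one]
    rw [hcalc] at h2
    linarith
  -- sum of D0 is positive
  set S : ℝ := ∑ t, f (e t) with hS
  have hSnn : 0 ≤ S := Finset.sum_nonneg fun t _ => hD0nn t
  have hBpt : ∀ δ : ℝ, 0 < δ → ((fun _ => v - δ) : (Fin s × Fin s) → ℝ) ∈ B := by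
    intro δ hδ t
    simp only [hB, Set.mem_setOf_eq]
    linarith
  have hSpos : 0 < S := by
    rcases eq_or_lt_of_le hSnn with h | h
    · exfalso
      have hall : ∀ t, f (e t) = 0 := by
        intro t
        have h0 := Finset.sum_eq_zero_iff_of_nonneg (fun t _ => hD0nn t) |>.mp h.symm
        exact h0 t (Finset.mem_univ t)
      have h1 := hfB _ (hBpt 1 one_pos)
      rw [hf_eq] at h1
      simp only [hall, mul_zero, Finset.sum_const_zero] at h1
      have h2 := hc0u
      rw [hc0, hf_eq] at h2
      simp only [hall, mul_zero, Finset.sum_const_zero] at h2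
      linarith
    · exact h
  -- u ≥ v * S
  have huS : v * S ≤ u := by
    by_contra hcon
    push_neg at hcon
    set δ : ℝ := (v * S - u) / S with hδ
    have hδpos : 0 < δ := div_pos (by linarith) hSpos
    have h1 := hfB _ (hBpt δ hδpos)
    rw [hf_eq] at h1
    have hcalc : ∑ t : Fin s × Fin s, (v - δ) * f (e t) = (v - δ) * S := by
      rw [hS, Finset.mul_sum]
    rw [hcalc] at h1
    have h2 : (v - δ) * S = u := by
      rw [hδ]
      field_simp
      ring
    rw [h2] at h1
    exact lt_irrefl u h1
  -- the distribution
  refine ⟨fun t => f (e t) / S, ⟨fun t => div_nonneg (hD0nn t) hSnn, ?_⟩, ?_⟩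
  · rw [← Finset.sum_div, ← hS, div_self hSpos.ne']
  intro Q hQb hQl
  -- key pointwise bound via perturbation
  refine ENNReal.le_of_forall_pos_le_add fun ε hε hfin => ?_
  have hεR : (0:ℝ) < (ε:ℝ) := hε
  set a : ℝ := Real.exp (-(ε:ℝ)) with ha
  have ha0 : 0 < a := Real.exp_pos _
  have ha1 : a < 1 := by
    rw [ha, Real.exp_lt_one_iff]
    linarith
  set b : ℝ := 1 - a with hb
  have hb0 : 0 < b := by rw [hb]; linarith
  have hab : a + b = 1 := by rw [hb]; ring
  set Qm : Fin r → Fin r → Fin s → Fin s → ℝ :=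
    fun α β x y => a * Q α β x y + b * unifB r s α β x y with hQm
  have hQmb : IsBehavior Qm := isBehavior_mix a b ha0.le hb0.le hab hQb hU
  have hQml : IsLocal Qm := isLocal_mix a b ha0.le hb0.le hab hQl hUl
  have hQmpos : ∀ α β x y, 0 < Qm α β x y := by
    intro α β x y
    have h1 := mul_nonneg ha0.le (hQb.1 α β x y)
    have h2 := mul_pos hb0 (hUpos α β x y)
    rw [hQm]
    dsimp only
    linarith
  have hgmA : (fun t : Fin s × Fin s =>
      gRel (outDist P t.1 t.2) (outDist Qm t.1 t.2)) ∈ A :=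
    ⟨Qm, hQmb, hQml, hQmpos, fun t => le_rfl⟩
  have hsum : v ≤ ∑ t : Fin s × Fin s,
      (f (e t) / S) * gRel (outDist P t.1 t.2) (outDist Qm t.1 t.2) := by
    have h1 := hfA _ hgmA
    rw [hf_eq] at h1
    have h2 : ∑ t : Fin s × Fin s,
        (f (e t) / S) * gRel (outDist P t.1 t.2) (outDist Qm t.1 t.2)
        = (∑ t : Fin s × Fin s,
            gRel (outDist P t.1 t.2) (outDist Qm t.1 t.2) * f (e t)) / S := by
      rw [Finset.sum_div]
      exact Finset.sum_congr rfl fun t _ => by ring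
    rw [h2, le_div_iff₀ hSpos]
    calc v * S ≤ u := huS
      _ ≤ ∑ t : Fin s × Fin s,
            gRel (outDist P t.1 t.2) (outDist Qm t.1 t.2) * f (e t) := h1
  -- convert to ENNReal
  have hloga : Real.log a⁻¹ = (ε:ℝ) := by
    rw [Real.log_inv, ha, Real.log_exp]
    ring
  have step1 : ENNReal.ofReal v ≤ ∑ t : Fin s × Fin s,
      ENNReal.ofReal ((f (e t) / S) * gRel (outDist P t.1 t.2) (outDist Qm t.1 t.2)) :=
    (ENNReal.ofReal_le_ofReal hsum).trans (ofReal_sum_le' _ _)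
  have step2 : ∀ t : Fin s × Fin s,
      ENNReal.ofReal ((f (e t) / S) * gRel (outDist P t.1 t.2) (outDist Qm t.1 t.2)) ≤
      ENNReal.ofReal (f (e t) / S) *
        (relEnt (outDist P t.1 t.2) (outDist Q t.1 t.2) + (ε : ℝ≥0∞)) := by
    intro t
    rw [ENNReal.ofReal_mul (div_nonneg (hD0nn t) hSnn)]
    refine mul_le_mul_right ?_ _
    by_cases hbad : ∃ z, outDist P t.1 t.2 z ≠ 0 ∧ outDist Q t.1 t.2 z = 0
    · rw [relEnt, if_pos hbad]
      rw [top_add]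
      exact le_top
    · push_neg at hbad
      have hsupp : ∀ z, outDist P t.1 t.2 z ≠ 0 → outDist Q t.1 t.2 z ≠ 0 := hbad
      have hpert := gRel_perturb (outDist P t.1 t.2) (outDist Q t.1 t.2)
        (outDist (unifB r s) t.1 t.2)
        ⟨fun z => hP.1 z.1 z.2 t.1 t.2, sum_outDist hP t.1 t.2⟩
        (fun z => hQb.1 z.1 z.2 t.1 t.2) (fun z => (hUpos z.1 z.2 t.1 t.2).le)
        hsupp a b ha0 hb0.le
      have harr : outDist Qm t.1 t.2
          = fun z => a * outDist Q t.1 t.2 z + b * outDist (unifB r s) t.1 t.2 z := rfl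
      rw [relEnt_eq_ofReal _ _ hsupp]
      calc ENNReal.ofReal (gRel (outDist P t.1 t.2) (outDist Qm t.1 t.2))
          ≤ ENNReal.ofReal (gRel (outDist P t.1 t.2) (outDist Q t.1 t.2)
              + Real.log a⁻¹) := by
            apply ENNReal.ofReal_le_ofReal
            rw [harr]
            exact hpert
        _ ≤ ENNReal.ofReal (gRel (outDist P t.1 t.2) (outDist Q t.1 t.2))
              + ENNReal.ofReal (Real.log a⁻¹) := ENNReal.ofReal_add_le
        _ = ENNReal.ofReal (gRel (outDist P t.1 t.2) (outDist Q t.1 t.2))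
              + (ε : ℝ≥0∞) := by
            rw [hloga, ENNReal.ofReal_coe_nnreal]
  have hDsum : ∑ t : Fin s × Fin s, ENNReal.ofReal (f (e t) / S) = 1 := by
    rw [← ENNReal.ofReal_sum_of_nonneg (fun t _ => div_nonneg (hD0nn t) hSnn)]
    rw [← Finset.sum_div, ← hS, div_self hSpos.ne', ENNReal.ofReal_one]
  calc ENNReal.ofReal v
      ≤ ∑ t : Fin s × Fin s, ENNReal.ofReal
          ((f (e t) / S) * gRel (outDist P t.1 t.2) (outDist Qm t.1 t.2)) := step1
    _ ≤ ∑ t : Fin s × Fin s, ENNReal.ofReal (f (e t) / S) *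
          (relEnt (outDist P t.1 t.2) (outDist Q t.1 t.2) + (ε : ℝ≥0∞)) :=
        Finset.sum_le_sum fun t _ => step2 t
    _ = (∑ t : Fin s × Fin s, ENNReal.ofReal (f (e t) / S) *
          relEnt (outDist P t.1 t.2) (outDist Q t.1 t.2))
          + (∑ t : Fin s × Fin s, ENNReal.ofReal (f (e t) / S)) * (ε : ℝ≥0∞) := by
        simp only [mul_add, Finset.sum_add_distrib, Finset.sum_mul]
    _ = (∑ t : Fin s × Fin s, ENNReal.ofReal (f (e t) / S) *
          relEnt (outDist P t.1 t.2) (outDist Q t.1 t.2)) + (ε : ℝ≥0∞) := by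
        rw [hDsum, one_mul]

set_option maxHeartbeats 1000000 in
/-- the statistical strength with correlated inputs equals the
relative entropy of nonlocality. -/
theorem Sc_eq_Snl {r s : ℕ} (hr : 0 < r) (hs : 0 < s)
    (P : Fin r → Fin r → Fin s → Fin s → ℝ)
    (hP : IsBehavior P) (hPns : NoSignaling P) :
    (⨆ (D : Fin s × Fin s → ℝ) (_ : IsDist D),
        ⨅ (Q : Fin r → Fin r → Fin s → Fin s → ℝ)
          (_ : IsBehavior Q ∧ IsLocal Q),
          ∑ x, ∑ y, ENNReal.ofReal (D (x, y)) *
            relEnt (outDist P x y) (outDist Q x y))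
      = Snl P := by
  apply le_antisymm
  · refine iSup_le fun D => iSup_le fun hD => ?_
    rw [Snl]
    refine le_iInf fun Q => le_iInf fun hQ => ?_
    refine (iInf₂_le Q hQ).trans ?_
    have hle : ∀ t : Fin s × Fin s,
        relEnt (outDist P t.1 t.2) (outDist Q t.1 t.2) ≤ Sb P Q :=
      fun t => by
        rw [Sb]
        exact Finset.le_sup (f := fun xy : Fin s × Fin s =>
          relEnt (outDist P xy.1 xy.2) (outDist Q xy.1 xy.2)) (Finset.mem_univ t)
    calc ∑ x, ∑ y, ENNReal.ofReal (D (x, y)) * relEnt (outDist P x y) (outDist Q x y)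
        = ∑ t : Fin s × Fin s, ENNReal.ofReal (D t) *
            relEnt (outDist P t.1 t.2) (outDist Q t.1 t.2) := by
          rw [Fintype.sum_prod_type]
      _ ≤ ∑ t : Fin s × Fin s, ENNReal.ofReal (D t) * Sb P Q :=
          Finset.sum_le_sum fun t _ => mul_le_mul_right (hle t) _
      _ = (∑ t : Fin s × Fin s, ENNReal.ofReal (D t)) * Sb P Q := by
          rw [Finset.sum_mul]
      _ = 1 * Sb P Q := by
          rw [← ENNReal.ofReal_sum_of_nonneg (fun t _ => hD.1 t), hD.2,
            ENNReal.ofReal_one]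
      _ = Sb P Q := one_mul _
  · rw [Snl]
    refine ENNReal.le_of_forall_nnreal_lt fun ρ hρ => ?_
    have hlt : ∀ Q, IsBehavior Q → IsLocal Q → ENNReal.ofReal (ρ:ℝ) < Sb P Q := by
      intro Q hQb hQl
      rw [ENNReal.ofReal_coe_nnreal]
      exact lt_of_lt_of_le hρ (iInf₂_le Q ⟨hQb, hQl⟩)
    obtain ⟨D, hD, hkey⟩ := exists_good_dist hr hs P hP (ρ:ℝ) ρ.coe_nonneg hlt
    refine le_iSup_of_le D (le_iSup_of_le hD (le_iInf fun Q => le_iInf fun hQ => ?_))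
    rw [← ENNReal.ofReal_coe_nnreal]
    refine (hkey Q hQ.1 hQ.2).trans ?_
    rw [Fintype.sum_prod_type]
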